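/- Let (Λ_0, ..., Λ_l) be a Δ-admissible tuple of Laurent polynomials over ℤ_p. Then for 0 ≤ s ≤ l the Hasse–Witt matrix decomposes as A(s+1, W_s) = Σ_{j=1}^{s} A(j, V_{j-1}) · σ^j(A(s-j+1, W_s^(j))) + A(s+1, V_s), where σ is the substitution z ↦ z^p applied entrywise. -/

import Mathlib

open AddMonoidAlgebra Pointwise

/-- Laurent polynomials in two groups of variables `t = (t_1,…,t_r)`, `z = (z_1,…,z_nz)`
over `R`: the monoid algebra on the group of pairs of exponent vectors. -/
abbrev LaurentTZ (R : Type*) [CommRing R] (r nz : ℕ) : Type _ :=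
  AddMonoidAlgebra R ((Fin r →₀ ℤ) × (Fin nz →₀ ℤ))

/-- Laurent polynomials in the variables `z` only. -/
abbrev LaurentZ (R : Type*) [CommRing R] (nz : ℕ) : Type _ :=
  AddMonoidAlgebra R (Fin nz →₀ ℤ)

/-- The substitution `(t,z) ↦ (t^q, z^q)` on Laurent polynomials in `t, z`. -/
noncomputable def frobTZ (R : Type*) [CommRing R] (r nz : ℕ) (q : ℕ) :
    LaurentTZ R r nz →+* LaurentTZ R r nz :=
  AddMonoidAlgebra.mapDomainRingHom R
    (DistribMulAction.toAddMonoidHom ((Fin r →₀ ℤ) × (Fin nz →₀ ℤ)) (q : ℤ))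

/-- The substitution `z ↦ z^q` on Laurent polynomials in `z`. -/
noncomputable def frobZ (R : Type*) [CommRing R] (nz : ℕ) (q : ℕ) :
    LaurentZ R nz →+* LaurentZ R nz :=
  AddMonoidAlgebra.mapDomainRingHom R
    (DistribMulAction.toAddMonoidHom (Fin nz →₀ ℤ) (q : ℤ))

/-- `Cf_w F`: the coefficient of `t^w` in `F(t,z)`, a Laurent polynomial in `z`. -/
noncomputable def CfT {R : Type*} [CommRing R] {r nz : ℕ}
    (w : Fin r →₀ ℤ) (F : LaurentTZ R r nz) : LaurentZ R nz :=
  AddMonoidAlgebra.ofCoeff (Finsupp.curry F.coeff w)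

/-- The Hasse–Witt matrix of level `m` of `F(t,z)` attached to the finite set
`Δ ⊂ ℤ^r`: the `Δ × Δ` matrix with `(u,v)` entry `Cf_{p^m v - u} F`. -/
noncomputable def HW {R : Type*} [CommRing R] {r nz : ℕ} (p : ℕ)
    (Δ : Finset (Fin r →₀ ℤ)) (m : ℕ) (F : LaurentTZ R r nz) :
    Matrix Δ Δ (LaurentZ R nz) :=
  fun u v => CfT (((p : ℤ) ^ m) • (v : Fin r →₀ ℤ) - (u : Fin r →₀ ℤ)) F

/-- `Wseg p Λ j s = Λ_j · Λ_{j+1}^p ··· Λ_s^(p^(s-j))` (for `j ≤ s`). -/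
noncomputable def Wseg {R : Type*} [CommRing R] {r nz : ℕ} (p : ℕ)
    (Λ : ℕ → LaurentTZ R r nz) (j s : ℕ) : LaurentTZ R r nz :=
  ∏ i ∈ Finset.range (s - j + 1), Λ (j + i) ^ p ^ i

/-- The embedding `ℤ^r → ℝ^r`. -/
noncomputable def latticeEmb (r : ℕ) : (Fin r →₀ ℤ) → (Fin r → ℝ) :=
  fun v i => (v i : ℝ)

/-- The Newton polytope of `F(t,z)` with respect to the `t`-variables only. -/
noncomputable def newtonT {R : Type*} [CommRing R] {r nz : ℕ}
    (F : LaurentTZ R r nz) : Set (Fin r → ℝ) :=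
  convexHull ℝ ((fun e : (Fin r →₀ ℤ) × (Fin nz →₀ ℤ) => latticeEmb r e.1) '' ↑F.coeff.support)

/-- `Δ`-admissibility of the tuple `(Λ_0, …, Λ_{l})`: for all `0 ≤ i ≤ j < l`,
`(Δ + N(Λ_i) + p·N(Λ_{i+1}) + ⋯ + p^{j-i}·N(Λ_j)) ∩ p^{j-i+1}ℤ^r ⊆ p^{j-i+1}Δ`,
where `N(·)` is the Newton polytope in the `t`-variables. -/
def IsAdmissible {R : Type*} [CommRing R] {r nz : ℕ} (p : ℕ)
    (Δ : Finset (Fin r →₀ ℤ)) (l : ℕ) (Λ : ℕ → LaurentTZ R r nz) : Prop :=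
  ∀ i j : ℕ, i ≤ j → j < l →
    (latticeEmb r '' ↑Δ +
        ∑ k ∈ Finset.range (j - i + 1), ((p : ℝ) ^ k) • newtonT (Λ (i + k))) ∩
      (((p : ℝ) ^ (j - i + 1)) • Set.range (latticeEmb r)) ⊆
    ((p : ℝ) ^ (j - i + 1)) • (latticeEmb r '' ↑Δ)


/-! ### Auxiliary lemmas -/

section Aux

variable {R : Type*} [CommRing R] {r nz : ℕ}

lemma CfT_apply (w : Fin r →₀ ℤ) (F : LaurentTZ R r nz) (ζ : Fin nz →₀ ℤ) :
    (CfT w F).coeff ζ = F.coeff (w, ζ) :=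
  Finsupp.curry_apply F.coeff w ζ

lemma CfT_add (w : Fin r →₀ ℤ) (F G : LaurentTZ R r nz) :
    CfT w (F + G) = CfT w F + CfT w G := by
  ext ζ
  rw [AddMonoidAlgebra.coeff_add, Finsupp.add_apply, CfT_apply, CfT_apply, CfT_apply]
  rfl

lemma CfT_zero (w : Fin r →₀ ℤ) : CfT (R := R) (r := r) (nz := nz) w 0 = 0 := by
  ext ζ; simp [CfT_apply]

/-- `CfT w` as an additive monoid hom. -/
noncomputable def CfTHom (w : Fin r →₀ ℤ) : LaurentTZ R r nz →+ LaurentZ R nz where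
  toFun := CfT w
  map_zero' := CfT_zero w
  map_add' := CfT_add w

lemma CfT_sum {ι : Type*} (I : Finset ι) (F : ι → LaurentTZ R r nz) (w : Fin r →₀ ℤ) :
    CfT w (∑ i ∈ I, F i) = ∑ i ∈ I, CfT w (F i) :=
  map_sum (CfTHom w) F I

lemma CfT_single (w : Fin r →₀ ℤ) (e : (Fin r →₀ ℤ) × (Fin nz →₀ ℤ)) (c : R) :
    CfT w (AddMonoidAlgebra.single e c) = if w = e.1 then AddMonoidAlgebra.single e.2 c else 0 := by
  obtain ⟨a, b⟩ := e
  ext ζ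
  rw [CfT_apply]
  by_cases h1 : w = a <;> by_cases h2 : b = ζ <;>
    simp [AddMonoidAlgebra.coeff_single, Finsupp.single_apply, Prod.ext_iff, h1, h2] <;> tauto

lemma HW_apply (p : ℕ) (Δ : Finset (Fin r →₀ ℤ)) (m : ℕ) (F : LaurentTZ R r nz)
    (u v : Δ) :
    HW p Δ m F u v = CfT (((p : ℤ) ^ m) • (v : Fin r →₀ ℤ) - (u : Fin r →₀ ℤ)) F := rfl

lemma HW_add (p : ℕ) (Δ : Finset (Fin r →₀ ℤ)) (m : ℕ) (F G : LaurentTZ R r nz) :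
    HW p Δ m (F + G) = HW p Δ m F + HW p Δ m G := by
  ext u v; simp [HW, CfT_add, Matrix.add_apply]

lemma HW_sum {ι : Type*} (I : Finset ι) (p : ℕ) (Δ : Finset (Fin r →₀ ℤ)) (m : ℕ)
    (F : ι → LaurentTZ R r nz) :
    HW p Δ m (∑ i ∈ I, F i) = ∑ i ∈ I, HW p Δ m (F i) := by
  ext u v; simp [HW, CfT_sum, Matrix.sum_apply]

lemma matrix_map_sum {ι n : Type*} [Fintype n] (I : Finset ι) (M : ι → Matrix n n (LaurentZ R nz))
    (φ : LaurentZ R nz →+* LaurentZ R nz) :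
    (∑ i ∈ I, M i).map φ = ∑ i ∈ I, (M i).map φ := by
  ext u v; simp [Matrix.map_apply, Matrix.sum_apply]

lemma frobTZ_single (q : ℕ) (e : (Fin r →₀ ℤ) × (Fin nz →₀ ℤ)) (c : R) :
    frobTZ R r nz q (AddMonoidAlgebra.single e c) = AddMonoidAlgebra.single ((q : ℤ) • e) c := by
  simp [frobTZ, Finsupp.mapDomain_single]

lemma frobZ_single (q : ℕ) (b : Fin nz →₀ ℤ) (c : R) :
    frobZ R nz q (AddMonoidAlgebra.single b c) = AddMonoidAlgebra.single ((q : ℤ) • b) c := by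
  simp [frobZ, Finsupp.mapDomain_single]

/-- The key computation for single monomials. -/
lemma HW_single_mul_frob_single (p : ℕ) (hp : p ≠ 0) (Δ : Finset (Fin r →₀ ℤ)) (j m : ℕ)
    (e f : (Fin r →₀ ℤ) × (Fin nz →₀ ℤ)) (c d : R)
    (hF : ∀ u ∈ Δ, ∀ w : Fin r →₀ ℤ, ((p : ℤ) ^ j) • w = e.1 + u → w ∈ Δ) :
    HW p Δ (j + m) (AddMonoidAlgebra.single e c * frobTZ R r nz (p ^ j) (AddMonoidAlgebra.single f d)) =
      HW p Δ j (AddMonoidAlgebra.single e c) *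
        (HW p Δ m (AddMonoidAlgebra.single f d)).map (frobZ R nz (p ^ j)) := by
  have hq : ((p : ℤ) ^ j) ≠ 0 := by
    exact_mod_cast pow_ne_zero j (by exact_mod_cast hp)
  have hcast : ((p ^ j : ℕ) : ℤ) = (p : ℤ) ^ j := by push_cast; ring
  have hcancel : ∀ w w' : Fin r →₀ ℤ, ((p : ℤ) ^ j) • w = ((p : ℤ) ^ j) • w' → w = w' :=
    fun w w' h => smul_right_injective (Fin r →₀ ℤ) hq h
  rw [frobTZ_single, hcast, AddMonoidAlgebra.single_mul_single]
  ext u v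
  rw [Matrix.mul_apply]
  have hLHS : HW p Δ (j + m) (AddMonoidAlgebra.single (e + (p : ℤ) ^ j • f) (c * d)) u v =
      if ((p : ℤ) ^ (j + m)) • (v : Fin r →₀ ℤ) - (u : Fin r →₀ ℤ)
          = e.1 + (p : ℤ) ^ j • f.1 then
        AddMonoidAlgebra.single (e.2 + (p : ℤ) ^ j • f.2) (c * d)
      else 0 := by
    rw [HW_apply, CfT_single]
    simp only [Prod.fst_add, Prod.snd_add, Prod.smul_fst, Prod.smul_snd]
  have hterm : ∀ w : Δ,
      HW p Δ j (AddMonoidAlgebra.single e c) u w *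
        (HW p Δ m (AddMonoidAlgebra.single f d)).map (frobZ R nz (p ^ j)) w v =
      (if ((p : ℤ) ^ j) • (w : Fin r →₀ ℤ) - (u : Fin r →₀ ℤ) = e.1 then
          AddMonoidAlgebra.single e.2 c else 0) *
      (if ((p : ℤ) ^ m) • (v : Fin r →₀ ℤ) - (w : Fin r →₀ ℤ) = f.1 then
          AddMonoidAlgebra.single ((p : ℤ) ^ j • f.2) d else 0) := by
    intro w
    rw [HW_apply, Matrix.map_apply, HW_apply, CfT_single, CfT_single,
      apply_ite (frobZ R nz (p ^ j)), map_zero, frobZ_single, hcast]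
  rw [hLHS, Finset.sum_congr rfl (fun w _ => hterm w)]
  have hpow : ((p : ℤ) ^ (j + m)) • (v : Fin r →₀ ℤ)
      = (p : ℤ) ^ j • ((p : ℤ) ^ m • (v : Fin r →₀ ℤ)) := by
    rw [pow_add, mul_smul]
  by_cases hex : ∃ w0 : Fin r →₀ ℤ, ((p : ℤ) ^ j) • w0 = e.1 + (u : Fin r →₀ ℤ)
  · obtain ⟨w0, hw0⟩ := hex
    have hw0Δ : w0 ∈ Δ := hF u u.2 w0 hw0
    rw [Finset.sum_eq_single_of_mem (⟨w0, hw0Δ⟩ : Δ) (Finset.mem_univ _)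
      (fun b _ hb => by
        rw [if_neg, zero_mul]
        intro hcon
        apply hb
        have hb2 : ((p : ℤ) ^ j) • (b : Fin r →₀ ℤ) = e.1 + (u : Fin r →₀ ℤ) := by
          rw [← hcon]; abel
        exact Subtype.ext (hcancel _ _ (hb2.trans hw0.symm)))]
    have h1 : ((p : ℤ) ^ j) • w0 - (u : Fin r →₀ ℤ) = e.1 := by
      rw [hw0]; abel
    rw [if_pos h1]
    have hcond : (((p : ℤ) ^ (j + m)) • (v : Fin r →₀ ℤ) - (u : Fin r →₀ ℤ)
          = e.1 + (p : ℤ) ^ j • f.1) ↔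
        (((p : ℤ) ^ m) • (v : Fin r →₀ ℤ) - w0 = f.1) := by
      constructor
      · intro h
        apply hcancel
        have h2 : (p : ℤ) ^ j • ((p : ℤ) ^ m • (v : Fin r →₀ ℤ))
            = e.1 + (p : ℤ) ^ j • f.1 + (u : Fin r →₀ ℤ) := by
          rw [← hpow, ← h]; abel
        rw [smul_sub, h2, hw0]
        abel
      · intro h
        have h2 : ((p : ℤ) ^ m) • (v : Fin r →₀ ℤ) = f.1 + w0 := by
          rw [← h]; abel
        rw [hpow, h2, smul_add, hw0]
        abel
    by_cases h2 : ((p : ℤ) ^ m) • (v : Fin r →₀ ℤ) - w0 = f.1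
    · rw [if_pos h2, if_pos (hcond.mpr h2), AddMonoidAlgebra.single_mul_single]
    · rw [if_neg h2, if_neg (fun hc => h2 (hcond.mp hc)), mul_zero]
  · rw [if_neg, Finset.sum_eq_zero]
    · intro w _
      rw [if_neg, zero_mul]
      intro hcon
      exact hex ⟨w, by rw [← hcon]; abel⟩
    · intro hcon
      apply hex
      refine ⟨((p : ℤ) ^ m) • (v : Fin r →₀ ℤ) - f.1, ?_⟩
      have h2 : ((p : ℤ) ^ (j + m)) • (v : Fin r →₀ ℤ)
          = e.1 + (p : ℤ) ^ j • f.1 + (u : Fin r →₀ ℤ) := by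
        rw [← hcon]; abel
      rw [smul_sub, ← hpow, h2]
      abel

/-- The key lemma: the Hasse–Witt matrix of a product `F · σ^j G` factors,
provided the `t`-support of `F` satisfies the divisibility condition. -/
lemma HW_mul_frob (p : ℕ) (hp : p ≠ 0) (Δ : Finset (Fin r →₀ ℤ)) (j m : ℕ)
    (F G : LaurentTZ R r nz)
    (hF : ∀ e ∈ F.coeff.support, ∀ u ∈ Δ, ∀ w : Fin r →₀ ℤ,
      ((p : ℤ) ^ j) • w = e.1 + u → w ∈ Δ) :
    HW p Δ (j + m) (F * frobTZ R r nz (p ^ j) G) =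
      HW p Δ j F * (HW p Δ m G).map (frobZ R nz (p ^ j)) := by
  classical
  have hFdec : F = ∑ e ∈ F.coeff.support, AddMonoidAlgebra.single e (F.coeff e) := by
    conv_lhs => rw [← AddMonoidAlgebra.sum_coeff_single F]
    rfl
  have hGdec : G = ∑ f ∈ G.coeff.support, AddMonoidAlgebra.single f (G.coeff f) := by
    conv_lhs => rw [← AddMonoidAlgebra.sum_coeff_single G]
    rfl
  have h1 : F * frobTZ R r nz (p ^ j) G =
      ∑ e ∈ F.coeff.support, ∑ f ∈ G.coeff.support,
        AddMonoidAlgebra.single e (F.coeff e) * frobTZ R r nz (p ^ j) (AddMonoidAlgebra.single f (G.coeff f)) := by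
    conv_lhs => rw [hFdec, hGdec]
    rw [map_sum (frobTZ R r nz (p ^ j)), Finset.sum_mul_sum]
  rw [h1, HW_sum]
  conv_rhs => rw [hFdec, hGdec]
  rw [HW_sum, HW_sum, matrix_map_sum, Finset.sum_mul_sum]
  refine Finset.sum_congr rfl fun e he => ?_
  rw [HW_sum]
  exact Finset.sum_congr rfl fun f _ =>
    HW_single_mul_frob_single p hp Δ j m e f (F.coeff e) (G.coeff f)
      (fun u hu w hw => hF e he u hu w hw)

/-! ### Newton polytope / support lemmas -/

lemma latticeEmb_add (a b : Fin r →₀ ℤ) :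
    latticeEmb r (a + b) = latticeEmb r a + latticeEmb r b := by
  funext i
  simp [latticeEmb, Finsupp.add_apply]

lemma latticeEmb_zero : latticeEmb r 0 = 0 := by
  funext i; simp [latticeEmb]

lemma latticeEmb_smul (n : ℤ) (a : Fin r →₀ ℤ) :
    latticeEmb r (n • a) = (n : ℝ) • latticeEmb r a := by
  funext i
  simp [latticeEmb, Finsupp.smul_apply]

lemma latticeEmb_injective : Function.Injective (latticeEmb r) := by
  intro a b h
  ext i
  have := congrFun h i
  simp only [latticeEmb] at this
  exact_mod_cast this

lemma mem_newtonT {F : LaurentTZ R r nz} {e : (Fin r →₀ ℤ) × (Fin nz →₀ ℤ)}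
    (he : e ∈ F.coeff.support) : latticeEmb r e.1 ∈ newtonT F :=
  subset_convexHull ℝ _ ⟨e, he, rfl⟩

lemma convex_newtonT (F : LaurentTZ R r nz) : Convex ℝ (newtonT F) :=
  convex_convexHull ℝ _

lemma mem_finsetSum_sets {ι X : Type*} [AddCommMonoid X] (I : Finset ι) (A : ι → Set X)
    (c : ι → X) (hc : ∀ i ∈ I, c i ∈ A i) : (∑ i ∈ I, c i) ∈ ∑ i ∈ I, A i := by
  classical
  induction I using Finset.induction with
  | empty => simp
  | @insert a s ha ih =>
    rw [Finset.sum_insert ha, Finset.sum_insert ha]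
    exact Set.add_mem_add (hc a (Finset.mem_insert_self a s))
      (ih fun i hi => hc i (Finset.mem_insert_of_mem hi))

lemma smul_mem_sum_smul {ι : Type*} (a : ℝ) (I : Finset ι) (A : ι → Set (Fin r → ℝ))
    (x : Fin r → ℝ) (hx : x ∈ ∑ i ∈ I, A i) : a • x ∈ ∑ i ∈ I, a • A i := by
  classical
  induction I using Finset.induction generalizing x with
  | empty =>
    simp only [Finset.sum_empty] at hx ⊢
    simp only [Set.mem_zero] at hx
    subst hx
    simp [Set.mem_zero]
  | @insert b s hb ih =>
    rw [Finset.sum_insert hb] at hx ⊢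
    obtain ⟨y, hy, z, hz, rfl⟩ := Set.mem_add.1 hx
    rw [smul_add]
    exact Set.add_mem_add (Set.smul_mem_smul_set hy) (ih z hz)

lemma supp_pow (p0 : ℕ) (F : LaurentTZ R r nz) :
    ∀ n : ℕ, 1 ≤ n → ∀ e ∈ (F ^ n).coeff.support, latticeEmb r e.1 ∈ (n : ℝ) • newtonT F := by
  classical
  intro n hn
  induction n, hn using Nat.le_induction with
  | base =>
    intro e he
    rw [pow_one] at he
    have : ((1 : ℕ) : ℝ) • newtonT F = newtonT F := by
      rw [Nat.cast_one, one_smul]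
    rw [this]
    exact mem_newtonT he
  | succ n hn ih =>
    intro e he
    rw [pow_succ] at he
    have hsub := AddMonoidAlgebra.support_coeff_mul_subset (F ^ n) F he
    rw [Finset.mem_add] at hsub
    obtain ⟨a, ha, b, hb, rfl⟩ := hsub
    have h1 : latticeEmb r (a + b).1 = latticeEmb r a.1 + latticeEmb r b.1 := by
      rw [Prod.fst_add, latticeEmb_add]
    rw [h1]
    have hsplit : ((n + 1 : ℕ) : ℝ) • newtonT F = (n : ℝ) • newtonT F + (1 : ℝ) • newtonT F := by
      rw [← (convex_newtonT F).add_smul (by positivity) (by norm_num : (0:ℝ) ≤ 1)]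
      norm_num
    rw [hsplit]
    refine Set.add_mem_add (ih a ha) ?_
    rw [one_smul]
    exact mem_newtonT hb

lemma supp_prod_pow (p : ℕ) (Λ : ℕ → LaurentTZ R r nz) (j : ℕ) (hp : p ≠ 0) :
    ∀ n : ℕ, ∀ e ∈ (∏ i ∈ Finset.range n, Λ (j + i) ^ p ^ i).coeff.support,
      latticeEmb r e.1 ∈ ∑ i ∈ Finset.range n, ((p : ℝ) ^ i) • newtonT (Λ (j + i)) := by
  classical
  intro n
  induction n with
  | zero =>
    intro e he
    rw [Finset.prod_range_zero] at he
    have h1 : (1 : LaurentTZ R r nz) = AddMonoidAlgebra.single 0 1 := rfl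
    rw [h1] at he
    have := Finsupp.support_single_subset he
    rw [Finset.mem_singleton] at this
    subst this
    simp [latticeEmb_zero]
  | succ n ih =>
    intro e he
    rw [Finset.prod_range_succ] at he
    have hsub := AddMonoidAlgebra.support_coeff_mul_subset _ _ he
    rw [Finset.mem_add] at hsub
    obtain ⟨a, ha, b, hb, rfl⟩ := hsub
    have h1 : latticeEmb r (a + b).1 = latticeEmb r a.1 + latticeEmb r b.1 := by
      rw [Prod.fst_add, latticeEmb_add]
    rw [h1, Finset.sum_range_succ]
    refine Set.add_mem_add (ih a ha) ?_
    have hb' := supp_pow p (Λ (j + n)) (p ^ n) (Nat.one_le_iff_ne_zero.2 (pow_ne_zero n hp)) b hb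
    have : ((p ^ n : ℕ) : ℝ) = (p : ℝ) ^ n := by push_cast; ring
    rwa [this] at hb'

end Aux

/-- The `t`-support of the ghost term `V s` lies in the Minkowski sum
`N(Λ_0) + p·N(Λ_1) + ⋯ + p^s·N(Λ_s)`. -/
lemma supp_V {R : Type*} [CommRing R] {r nz : ℕ} (p : ℕ) (hp : p ≠ 0) (l : ℕ)
    (Λ V : ℕ → LaurentTZ R r nz)
    (hV : ∀ s ≤ l, V s =
      Wseg p Λ 0 s -
        ∑ j ∈ Finset.Icc 1 s,
          V (j - 1) * frobTZ R r nz (p ^ j) (Wseg p Λ j s)) :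
    ∀ s, s ≤ l → ∀ e ∈ (V s).coeff.support,
      latticeEmb r e.1 ∈ ∑ k ∈ Finset.range (s + 1), ((p : ℝ) ^ k) • newtonT (Λ k) := by
  classical
  intro s
  induction s using Nat.strong_induction_on with
  | _ s ih =>
    intro hs e he
    rw [hV s hs, AddMonoidAlgebra.coeff_sub] at he
    rcases Finset.mem_union.1 (Finsupp.support_sub he) with h | h
    · have hres := supp_prod_pow p Λ 0 hp (s - 0 + 1) e (by rw [Wseg] at h; exact h)
      simpa using hres
    · obtain ⟨i, hiI, hei⟩ := Finsupp.mem_support_finsetSum e (by rwa [AddMonoidAlgebra.coeff_sum] at h)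
      have hi1 : 1 ≤ i := (Finset.mem_Icc.1 hiI).1
      have his : i ≤ s := (Finset.mem_Icc.1 hiI).2
      have hsub := AddMonoidAlgebra.support_coeff_mul_subset _ _ hei
      rw [Finset.mem_add] at hsub
      obtain ⟨a, ha, b', hb', rfl⟩ := hsub
      have hfrob : (frobTZ R r nz (p ^ i) (Wseg p Λ i s)).coeff =
          Finsupp.mapDomain (fun x : (Fin r →₀ ℤ) × (Fin nz →₀ ℤ) =>
            ((p ^ i : ℕ) : ℤ) • x) (Wseg p Λ i s).coeff := rfl
      have hmap : b' ∈ (Wseg p Λ i s).coeff.support.image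
          (fun x : (Fin r →₀ ℤ) × (Fin nz →₀ ℤ) => ((p ^ i : ℕ) : ℤ) • x) := by
        rw [hfrob] at hb'
        exact Finsupp.mapDomain_support hb'
      obtain ⟨b, hb, rfl⟩ := Finset.mem_image.1 hmap
      have hA := ih (i - 1) (by omega) (by omega) a ha
      rw [(by omega : i - 1 + 1 = i)] at hA
      have hB := supp_prod_pow p Λ i hp (s - i + 1) b (by rw [Wseg] at hb; exact hb)
      have hcast : (((p ^ i : ℕ) : ℤ) : ℝ) = (p : ℝ) ^ i := by push_cast; ring
      have hdec : latticeEmb r ((a + ((p ^ i : ℕ) : ℤ) • b).1) =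
          latticeEmb r a.1 + ((p : ℝ) ^ i) • latticeEmb r b.1 := by
        rw [Prod.fst_add, latticeEmb_add, Prod.smul_fst, latticeEmb_smul, hcast]
      rw [hdec]
      have hB' : ((p : ℝ) ^ i) • latticeEmb r b.1 ∈
          ∑ m ∈ Finset.range (s - i + 1), ((p : ℝ) ^ (i + m)) • newtonT (Λ (i + m)) := by
        have hmem := smul_mem_sum_smul ((p : ℝ) ^ i) _ _ _ hB
        have hsets : ∑ m ∈ Finset.range (s - i + 1),
              ((p : ℝ) ^ i) • (((p : ℝ) ^ m) • newtonT (Λ (i + m))) =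
            ∑ m ∈ Finset.range (s - i + 1),
              ((p : ℝ) ^ (i + m)) • newtonT (Λ (i + m)) :=
          Finset.sum_congr rfl fun m _ => by rw [smul_smul, ← pow_add]
        rw [← hsets]
        exact hmem
      have hsplit : ∑ k ∈ Finset.range (s + 1), ((p : ℝ) ^ k) • newtonT (Λ k) =
          (∑ k ∈ Finset.range i, ((p : ℝ) ^ k) • newtonT (Λ k)) +
            ∑ m ∈ Finset.range (s - i + 1), ((p : ℝ) ^ (i + m)) • newtonT (Λ (i + m)) := by
        rw [(by omega : s + 1 = i + (s - i + 1)),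
          Finset.sum_range_add (fun k => ((p : ℝ) ^ k) • newtonT (Λ k)) i (s - i + 1)]
      rw [hsplit]
      exact Set.add_mem_add hA hB'

/-- for a `Δ`-admissible tuple `(Λ_0,…,Λ_l)` over `ℤ_p` and the ghosts
`V_s`, the Hasse–Witt matrix decomposes as
`A(s+1, W_s) = Σ_{j=1}^s A(j, V_{j-1}) · σ^j(A(s-j+1, W_s^{(j)})) + A(s+1, V_s)`,
where `σ^j` is the entrywise substitution `z ↦ z^{p^j}`. -/
theorem hasseWitt_decomposition (p : ℕ) (hp : p.Prime) [Fact p.Prime]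
    (r nz : ℕ) (Δ : Finset (Fin r →₀ ℤ)) (l : ℕ)
    (Λ V : ℕ → LaurentTZ ℤ_[p] r nz)
    (hadm : IsAdmissible p Δ l Λ)
    (hV : ∀ s ≤ l, V s =
      Wseg p Λ 0 s -
        ∑ j ∈ Finset.Icc 1 s,
          V (j - 1) * frobTZ ℤ_[p] r nz (p ^ j) (Wseg p Λ j s)) :
    ∀ s ≤ l,
      HW p Δ (s + 1) (Wseg p Λ 0 s) =
        (∑ j ∈ Finset.Icc 1 s,
          HW p Δ j (V (j - 1)) *
            (HW p Δ (s - j + 1) (Wseg p Λ j s)).map (frobZ ℤ_[p] nz (p ^ j))) +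
        HW p Δ (s + 1) (V s) := by
  classical
  intro s hs
  have hp0 : p ≠ 0 := hp.ne_zero
  have hW : Wseg p Λ 0 s =
      (∑ j ∈ Finset.Icc 1 s, V (j - 1) * frobTZ ℤ_[p] r nz (p ^ j) (Wseg p Λ j s)) + V s := by
    have h := hV s hs
    rw [h]
    ring
  conv_lhs => rw [hW]
  rw [HW_add, HW_sum]
  congr 1
  refine Finset.sum_congr rfl fun j hj => ?_
  have hj1 : 1 ≤ j := (Finset.mem_Icc.1 hj).1
  have hjs : j ≤ s := (Finset.mem_Icc.1 hj).2
  have hjm : j + (s - j + 1) = s + 1 := by omega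
  rw [← hjm]
  refine HW_mul_frob p hp0 Δ j (s - j + 1) _ _ ?_
  intro e he u hu w hw
  have hsuppV := supp_V p hp0 l Λ V hV (j - 1) (by omega) e he
  rw [(by omega : j - 1 + 1 = j)] at hsuppV
  have hadm' := hadm 0 (j - 1) (Nat.zero_le _) (by omega : j - 1 < l)
  rw [(by omega : j - 1 - 0 + 1 = j)] at hadm'
  simp only [zero_add] at hadm'
  have hx : latticeEmb r u + latticeEmb r e.1 ∈
      (latticeEmb r '' ↑Δ) + ∑ k ∈ Finset.range j, ((p : ℝ) ^ k) • newtonT (Λ k) :=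
    Set.add_mem_add (Set.mem_image_of_mem _ hu) hsuppV
  have hx2 : latticeEmb r u + latticeEmb r e.1 = ((p : ℝ) ^ j) • latticeEmb r w := by
    rw [← latticeEmb_add, (show u + e.1 = ((p : ℤ) ^ j) • w by rw [add_comm]; exact hw.symm),
      latticeEmb_smul]
    norm_cast
  have hmem : latticeEmb r u + latticeEmb r e.1 ∈
      ((p : ℝ) ^ j) • Set.range (latticeEmb r) := by
    rw [hx2]
    exact Set.smul_mem_smul_set ⟨w, rfl⟩
  obtain ⟨y, hy, hxy⟩ := hadm' ⟨hx, hmem⟩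
  obtain ⟨u', hu', rfl⟩ := hy
  have hpj : ((p : ℝ) ^ j) ≠ 0 := pow_ne_zero _ (Nat.cast_ne_zero.2 hp0)
  have heq : latticeEmb r u' = latticeEmb r w :=
    smul_right_injective (Fin r → ℝ) hpj (by rw [hxy, hx2])
  have : u' = w := latticeEmb_injective heq
  rw [← this]
  exact_mod_cast hu'
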